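/- Let Σ be a geodesic sphere in ℍⁿ (n ≥ 3) of radius r, not necessarily centered at the origin, with B the geodesic ball it bounds. Then ∫_Σ ρ H dΣ = n(n-1) coth²r · ∫_B ρ dV, where ρ = cosh(dist to origin), H = (n-1)coth r is the mean curvature, and dV is hyperbolic volume. -/

import Mathlib

set_option maxHeartbeats 1000000


open MeasureTheory

noncomputable section

/-- The Minkowski bilinear form on ℝ^{n+1}. -/
def mink (n : ℕ) (x y : Fin (n + 1) → ℝ) : ℝ :=
  (∑ i : Fin n, x i.succ * y i.succ) - x 0 * y 0

/-- The hyperboloid model of hyperbolic n-space ℍⁿ, with origin the pole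
(1,0,…,0); the function ρ = cosh(dist to origin) is the restriction of
x ↦ x 0. -/
def Hyperboloid (n : ℕ) : Set (Fin (n + 1) → ℝ) :=
  {x | mink n x x = -1 ∧ 0 < x 0}

section Aux

variable {n : ℕ}

/-- Negation preserves the Hausdorff measure restricted to the unit sphere. -/
lemma neg_measurePreserving_sphere (n : ℕ) (d : ℝ) :
    MeasurePreserving (fun w : EuclideanSpace ℝ (Fin n) => -w)
      ((μH[d] : Measure (EuclideanSpace ℝ (Fin n))).restrict
        (Metric.sphere (0 : EuclideanSpace ℝ (Fin n)) 1))
      ((μH[d] : Measure (EuclideanSpace ℝ (Fin n))).restrict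
        (Metric.sphere (0 : EuclideanSpace ℝ (Fin n)) 1)) := by
  have h1 : MeasurePreserving (fun w : EuclideanSpace ℝ (Fin n) => -w)
      (μH[d] : Measure (EuclideanSpace ℝ (Fin n))) μH[d] :=
    (IsometryEquiv.neg (EuclideanSpace ℝ (Fin n))).measurePreserving_hausdorffMeasure d
  have hpre : (fun w : EuclideanSpace ℝ (Fin n) => -w) ⁻¹'
      (Metric.sphere (0 : EuclideanSpace ℝ (Fin n)) 1)
      = Metric.sphere (0 : EuclideanSpace ℝ (Fin n)) 1 := by
    ext w
    simp [Metric.mem_sphere, dist_zero_right]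
  have := h1.restrict_preimage
    (s := Metric.sphere (0 : EuclideanSpace ℝ (Fin n)) 1) Metric.isClosed_sphere.measurableSet
  rwa [hpre] at this

/-- The key computation: the sphere integral of the linear part vanishes by
symmetry, so the integral equals the constant part times the total measure. -/
lemma sphere_integral_eq (n : ℕ) (s : ℝ) (q : Fin (n + 1) → ℝ) (hq0 : 0 < q 0)
    (ι : EuclideanSpace ℝ (Fin n) →ₗ[ℝ] (Fin (n + 1) → ℝ)) :
    (∫ w in Metric.sphere (0 : EuclideanSpace ℝ (Fin n)) 1,
        (Real.cosh s • q + Real.sinh s • ι w) 0 ∂(μH[((n : ℝ) - 1)]))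
      = Real.cosh s * q 0 *
        ((μH[((n : ℝ) - 1)] : Measure (EuclideanSpace ℝ (Fin n)))
          (Metric.sphere (0 : EuclideanSpace ℝ (Fin n)) 1)).toReal := by
  set μ : Measure (EuclideanSpace ℝ (Fin n)) := μH[((n : ℝ) - 1)] with hμ
  set S := Metric.sphere (0 : EuclideanSpace ℝ (Fin n)) 1 with hS
  have hgeq : ∀ w : EuclideanSpace ℝ (Fin n),
      (Real.cosh s • q + Real.sinh s • ι w) 0
        = Real.cosh s * q 0 + Real.sinh s * (ι w 0) := by
    intro w
    simp [Pi.add_apply, Pi.smul_apply, smul_eq_mul]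
  have hcontf : Continuous fun w : EuclideanSpace ℝ (Fin n) => ι w 0 :=
    (continuous_apply (0 : Fin (n + 1))).comp ι.continuous_of_finiteDimensional
  have hneg := neg_measurePreserving_sphere n ((n : ℝ) - 1)
  have hemb : MeasurableEmbedding (fun w : EuclideanSpace ℝ (Fin n) => -w) :=
    (Homeomorph.neg (EuclideanSpace ℝ (Fin n))).measurableEmbedding
  by_cases hfin : μ S < ⊤
  · haveI : IsFiniteMeasure (μ.restrict S) :=
      ⟨by rwa [Measure.restrict_apply_univ]⟩
    -- integrability of the linear part
    obtain ⟨C, hC⟩ := (isCompact_sphere (0 : EuclideanSpace ℝ (Fin n)) 1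
      ).exists_bound_of_continuousOn hcontf.continuousOn
    have hintf : Integrable (fun w => ι w 0) (μ.restrict S) := by
      refine Integrable.mono' (integrable_const C) hcontf.aestronglyMeasurable ?_
      exact (ae_restrict_iff' Metric.isClosed_sphere.measurableSet).2 (Filter.Eventually.of_forall hC)
    -- the linear part integrates to zero
    have hodd : ∫ w in S, ι w 0 ∂μ = 0 := by
      have h1 : ∫ w, ι (-w) 0 ∂(μ.restrict S) = ∫ w, ι w 0 ∂(μ.restrict S) :=
        hneg.integral_comp hemb (fun w => ι w 0)
      have h2 : (fun w : EuclideanSpace ℝ (Fin n) => ι (-w) 0)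
          = fun w => -(ι w 0) := by
        funext w; rw [map_neg]; simp
      rw [h2, integral_neg] at h1
      linarith
    calc ∫ w in S, (Real.cosh s • q + Real.sinh s • ι w) 0 ∂μ
        = ∫ w in S, (Real.cosh s * q 0 + Real.sinh s * (ι w 0)) ∂μ := by
          simp_rw [hgeq]
      _ = (∫ _ in S, Real.cosh s * q 0 ∂μ) + ∫ w in S, Real.sinh s * (ι w 0) ∂μ :=
          integral_add (integrable_const _) (hintf.const_mul _)
      _ = Real.cosh s * q 0 * (μ S).toReal := by
          rw [setIntegral_const, integral_const_mul, hodd]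
          simp [mul_comm, smul_eq_mul, Measure.real]
  · -- infinite measure: the integrand is not integrable, both sides are zero
    have htop : μ S = ⊤ := top_le_iff.1 (not_lt.1 hfin)
    have hm : (μ S).toReal = 0 := by simp [htop]
    have hnotint : ¬ Integrable
        (fun w => (Real.cosh s • q + Real.sinh s • ι w) 0) (μ.restrict S) := by
      intro hint
      have hcomp := (hneg.integrable_comp_emb hemb
        (g := fun w => (Real.cosh s • q + Real.sinh s • ι w) 0)).2 hint
      simp only [Function.comp_def] at hcomp
      have hsum := hint.add hcomp
      have heq : (fun w => (Real.cosh s • q + Real.sinh s • ι w) 0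
            + (Real.cosh s • q + Real.sinh s • ι (-w)) 0)
          = fun _ : EuclideanSpace ℝ (Fin n) => 2 * (Real.cosh s * q 0) := by
        funext w
        rw [hgeq, map_neg]
        simp [hgeq]
        ring
      have hconst : Integrable
          (fun _ : EuclideanSpace ℝ (Fin n) => 2 * (Real.cosh s * q 0))
          (μ.restrict S) := by
        refine hsum.congr (Filter.Eventually.of_forall fun w => ?_)
        simpa only [Pi.add_apply] using congrFun heq w
      rcases (integrable_const_iff).1 hconst with h | h
      · have : Real.cosh s * q 0 ≠ 0 :=
          ne_of_gt (mul_pos (Real.cosh_pos s) hq0)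
        exact this (by linarith [mul_eq_zero.1 h])
      · have h := h.measure_univ_lt_top
        rw [Measure.restrict_apply_univ] at h
        exact hfin h
    rw [integral_undef hnotint, hm, mul_zero]

end Aux

/-- For a geodesic sphere Σ of radius r₀ centered at q ∈ ℍⁿ (not necessarily
the origin), bounding the geodesic ball B, one has
∫_Σ ρ H dΣ = n(n-1) coth²r₀ ∫_B ρ dV.  The sphere is parametrized by
θ ↦ cosh r₀·q + sinh r₀·ι(θ) over the unit sphere of the tangent space at q
(identified with Euclidean ℝⁿ by a linear isometry ι of the Minkowski form
restricted to q^⊥), with area element sinh^{n-1}r₀ dσ, H = (n-1)coth r₀, and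
the ball integral written in geodesic polar coordinates about q; dσ is the
(n-1)-dimensional Hausdorff measure on the unit sphere of ℝⁿ. -/
theorem geodesic_sphere_integral_identity (n : ℕ) (hn : 3 ≤ n)
    (r₀ : ℝ) (hr₀ : 0 < r₀)
    (q : Fin (n + 1) → ℝ) (hq : q ∈ Hyperboloid n)
    (ι : EuclideanSpace ℝ (Fin n) →ₗ[ℝ] (Fin (n + 1) → ℝ))
    (hι : ∀ w w' : EuclideanSpace ℝ (Fin n),
      mink n (ι w) (ι w') = (inner ℝ w w' : ℝ))
    (hιq : ∀ w : EuclideanSpace ℝ (Fin n), mink n q (ι w) = 0) :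
    ((n : ℝ) - 1) * (Real.cosh r₀ / Real.sinh r₀) * Real.sinh r₀ ^ (n - 1) *
        (∫ w in Metric.sphere (0 : EuclideanSpace ℝ (Fin n)) 1,
          (Real.cosh r₀ • q + Real.sinh r₀ • ι w) 0 ∂(μH[((n : ℝ) - 1)]))
      = (n : ℝ) * ((n : ℝ) - 1) * (Real.cosh r₀ / Real.sinh r₀) ^ 2 *
        (∫ s in Set.Ioc (0 : ℝ) r₀, (Real.sinh s ^ (n - 1) *
          ∫ w in Metric.sphere (0 : EuclideanSpace ℝ (Fin n)) 1,
            (Real.cosh s • q + Real.sinh s • ι w) 0 ∂(μH[((n : ℝ) - 1)]))) := by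
  obtain ⟨-, hq0⟩ := hq
  set m : ℝ := ((μH[((n : ℝ) - 1)] : Measure (EuclideanSpace ℝ (Fin n)))
    (Metric.sphere (0 : EuclideanSpace ℝ (Fin n)) 1)).toReal with hm
  have key := fun s => sphere_integral_eq n s q hq0 ι
  simp only [key]
  -- compute the radial integral
  have hns : (n : ℝ) ≠ 0 := by positivity
  have hrad : ∫ s in Set.Ioc (0 : ℝ) r₀,
      Real.sinh s ^ (n - 1) * (Real.cosh s * q 0 * m)
      = Real.sinh r₀ ^ n / n * (q 0 * m) := by
    have h1 : (fun s => Real.sinh s ^ (n - 1) * (Real.cosh s * q 0 * m))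
        = fun s => (Real.sinh s ^ (n - 1) * Real.cosh s) * (q 0 * m) := by
      funext s; ring
    rw [h1, integral_mul_const]
    have h2 : ∫ s in Set.Ioc (0 : ℝ) r₀, Real.sinh s ^ (n - 1) * Real.cosh s
        = Real.sinh r₀ ^ n / n := by
      rw [← intervalIntegral.integral_of_le hr₀.le]
      have hderiv : ∀ x ∈ Set.uIcc (0 : ℝ) r₀,
          HasDerivAt (fun t => Real.sinh t ^ n / n)
            (Real.sinh x ^ (n - 1) * Real.cosh x) x := by
        intro x _
        have h := ((Real.hasDerivAt_sinh x).pow n).div_const (n : ℝ)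
        exact h.congr_deriv (by rw [mul_assoc, mul_div_cancel_left₀ _ hns])
      have hcont : IntervalIntegrable
          (fun x => Real.sinh x ^ (n - 1) * Real.cosh x) volume 0 r₀ :=
        ((Real.continuous_sinh.pow (n - 1)).mul Real.continuous_cosh).intervalIntegrable 0 r₀
      rw [intervalIntegral.integral_eq_sub_of_hasDerivAt hderiv hcont]
      simp [Real.sinh_zero, zero_pow (by omega : n ≠ 0)]
    rw [h2]
  rw [hrad]
  -- final algebra
  have hs : Real.sinh r₀ > 0 := Real.sinh_pos_iff.2 hr₀
  have hpow : Real.sinh r₀ ^ n = Real.sinh r₀ ^ (n - 1) * Real.sinh r₀ := by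
    rw [← pow_succ]
    congr 1
    omega
  rw [hpow]
  field_simp
  ring
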